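/- arXiv:1111.4590 — 6 statements merged into one kernel-verified Lean document; each statement's English description precedes it below -/
import Mathlib

section
/- Let A be a nonsingular 2×2 complex matrix with entries a,b,c,d such that the *-cosquare (A*)⁻¹A has eigenvalues μ and 1/conj(μ) with 0 < |μ| < 1. Then |a·conj(d) + conj(a)·d − |c|² − |b|²| > 2·|ad − bc|. -/
open Matrix Polynomial

/-- If the *-cosquare `(Aᴴ)⁻¹A` of a nonsingular matrix `A = !![a,b;c,d]` has
eigenvalues `μ` and `1/conj μ` with `0 < |μ| < 1`, then
`|a conj d + conj a d − |c|² − |b|²| > 2 |ad − bc|`. -/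
theorem star_cosquare_nonunimodular_eigenvalues
    (a b c d mu : ℂ)
    (hA : IsUnit (!![a, b; c, d] : Matrix (Fin 2) (Fin 2) ℂ).det)
    (hmu0 : 0 < ‖mu‖) (hmu1 : ‖mu‖ < 1)
    (hchar : ((!![a, b; c, d] : Matrix (Fin 2) (Fin 2) ℂ)ᴴ⁻¹ * !![a, b; c, d]).charpoly
      = (X - C mu) * (X - C (1 / starRingEnd ℂ mu))) :
    2 * ‖a * d - b * c‖
      < ‖a * starRingEnd ℂ d + starRingEnd ℂ a * d
          - (‖c‖ : ℂ) ^ 2 - (‖b‖ : ℂ) ^ 2‖ := by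
  have hΔ : (a * d - b * c) ≠ 0 := by
    have := hA.ne_zero
    rwa [Matrix.det_fin_two_of] at this
  have hΔc : starRingEnd ℂ (a * d - b * c) ≠ 0 := by
    intro h; apply hΔ; simpa using congrArg (starRingEnd ℂ) h
  -- trace computation
  have htr : ((!![a, b; c, d] : Matrix (Fin 2) (Fin 2) ℂ)ᴴ⁻¹ * !![a, b; c, d]).trace
      = (starRingEnd ℂ (a*d-b*c))⁻¹ * (a * starRingEnd ℂ d + starRingEnd ℂ a * d
          - starRingEnd ℂ c * c - starRingEnd ℂ b * b) := by
    have hAH : (!![a,b;c,d] : Matrix (Fin 2) (Fin 2) ℂ)ᴴ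
        = !![starRingEnd ℂ a, starRingEnd ℂ c; starRingEnd ℂ b, starRingEnd ℂ d] := by
      ext i j; fin_cases i <;> fin_cases j <;> simp [Matrix.conjTranspose_apply]
    rw [Matrix.inv_def, Ring.inverse_eq_inv', hAH, Matrix.adjugate_fin_two_of,
      Matrix.det_fin_two_of, Matrix.smul_mul, Matrix.trace_smul, Matrix.mul_fin_two,
      Matrix.trace_fin_two_of]
    rw [smul_eq_mul]
    ring_nf
    simp [_root_.map_sub, _root_.map_mul]
    ring
  -- trace from charpoly
  have htr2 : ((!![a, b; c, d] : Matrix (Fin 2) (Fin 2) ℂ)ᴴ⁻¹ * !![a, b; c, d]).trace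
      = mu + 1 / starRingEnd ℂ mu := by
    rw [Matrix.trace_eq_neg_charpoly_coeff, hchar]
    have : (X - C mu) * (X - C (1 / starRingEnd ℂ mu))
        = X^2 - C (mu + 1 / starRingEnd ℂ mu) * X + C (mu * (1 / starRingEnd ℂ mu)) := by
      ring_nf; simp [C_mul, C_add]; ring
    rw [this]
    simp [coeff_X_pow]
  set T : ℂ := a * starRingEnd ℂ d + starRingEnd ℂ a * d
      - starRingEnd ℂ c * c - starRingEnd ℂ b * b with hT
  have hTe : T = (mu + 1 / starRingEnd ℂ mu) * starRingEnd ℂ (a*d-b*c) := by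
    have h := htr.symm.trans htr2
    rw [inv_mul_eq_iff_eq_mul₀ hΔc] at h
    rw [h]; ring
  -- rewrite goal argument as T
  have hargs : a * starRingEnd ℂ d + starRingEnd ℂ a * d
          - (‖c‖ : ℂ) ^ 2 - (‖b‖ : ℂ) ^ 2 = T := by
    have h1 : ((‖c‖ : ℂ)) ^ 2 = starRingEnd ℂ c * c := by
      rw [show ((‖c‖ : ℂ))^2 = ((‖c‖ ^ 2 : ℝ) : ℂ) by push_cast; ring,
        Complex.sq_norm, ← Complex.mul_conj]
      ring
    have h2 : ((‖b‖ : ℂ)) ^ 2 = starRingEnd ℂ b * b := by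
      rw [show ((‖b‖ : ℂ))^2 = ((‖b‖ ^ 2 : ℝ) : ℂ) by push_cast; ring,
        Complex.sq_norm, ← Complex.mul_conj]
      ring
    rw [h1, h2, hT]
  rw [hargs, hTe]
  have hmne : mu ≠ 0 := by
    intro h; rw [h] at hmu0; simp at hmu0
  have hcmne : starRingEnd ℂ mu ≠ 0 := by simpa using hmne
  set r : ℝ := ‖mu‖ with hr
  have habs : ‖mu + 1 / starRingEnd ℂ mu‖ = r + 1/r := by
    have key : mu + 1/starRingEnd ℂ mu = mu * (1 + ((Complex.normSq mu : ℝ) : ℂ)⁻¹) := by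
      rw [mul_add, mul_one, ← Complex.mul_conj]
      field_simp
    rw [key, norm_mul]
    have h3 : ‖(1 + ((Complex.normSq mu : ℝ) : ℂ)⁻¹)‖
        = 1 + (Complex.normSq mu)⁻¹ := by
      rw [show (1 + ((Complex.normSq mu : ℝ) : ℂ)⁻¹) = (((1 + (Complex.normSq mu)⁻¹ : ℝ)) : ℂ) by
        push_cast; ring]
      rw [Complex.norm_real, Real.norm_eq_abs, abs_of_nonneg]
      have := Complex.normSq_nonneg mu
      have h4 : 0 ≤ (Complex.normSq mu)⁻¹ := inv_nonneg.mpr this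
      linarith
    rw [h3, ← Complex.sq_norm, ← hr]
    have hrpos : 0 < r := hmu0
    field_simp
  rw [norm_mul, habs, Complex.norm_conj]
  have hrpos : 0 < r := hmu0
  have hr1 : r < 1 := hmu1
  have hkey : 2 < r + 1/r := by
    have he : r + 1/r - 2 = (1-r)*(1-r)/r := by field_simp; ring
    have hp : 0 < (1-r)*(1-r)/r :=
      div_pos (mul_pos (by linarith) (by linarith)) hrpos
    linarith [he ▸ hp]
  have habsΔ : 0 < ‖a*d - b*c‖ := by
    simpa using norm_pos_iff.mpr hΔ
  nlinarith
end

section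
/- The pair (A,B) with A = [[1,0],[0,−1]], B = 0 and the pair (A',B') with A' = 0, B' = [[1,0],[0,1]] can be joined by a continuous path (A_t, B_t) in pairs of 2×2 complex matrices with B_t symmetric such that det [[A_t, conj(B_t)],[B_t, conj(A_t)]] > 0 for all t ∈ [0,1]. -/
open Matrix ComplexOrder

lemma det_fromBlocks_fin_two (A B C D : Matrix (Fin 2) (Fin 2) ℂ) :
    (Matrix.fromBlocks A B C D).det =
      (!![A 0 0, A 0 1, B 0 0, B 0 1;
          A 1 0, A 1 1, B 1 0, B 1 1;
          C 0 0, C 0 1, D 0 0, D 0 1;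
          C 1 0, C 1 1, D 1 0, D 1 1] : Matrix (Fin 4) (Fin 4) ℂ).det := by
  rw [← Matrix.det_submatrix_equiv_self finSumFinEquiv.symm (Matrix.fromBlocks A B C D)]
  congr 1
  ext i j
  fin_cases i <;> fin_cases j <;> rfl

noncomputable def Apath (t : ℝ) : Matrix (Fin 2) (Fin 2) ℂ :=
  !![((1 - t : ℝ) : ℂ), (t * (1 - t) : ℝ) * Complex.I;
     -((t * (1 - t) : ℝ) * Complex.I), -((1 - t : ℝ) : ℂ)]

noncomputable def Bpath (t : ℝ) : Matrix (Fin 2) (Fin 2) ℂ :=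
  !![(t : ℂ), 0; 0, (t : ℂ)]

lemma det_path (t : ℝ) :
    (Matrix.fromBlocks (Apath t) ((Bpath t).map (starRingEnd ℂ)) (Bpath t)
      ((Apath t).map (starRingEnd ℂ))).det
    = ((((1-t)^2 - (t*(1-t))^2 - t^2)^2 + 4*(1-t)^2*(t*(1-t))^2 : ℝ) : ℂ) := by
  rw [det_fromBlocks_fin_two]
  simp [Apath, Bpath, Matrix.det_succ_row_zero, Fin.sum_univ_succ, Fin.succAbove,
    Complex.conj_ofReal, Complex.ext_iff]
  constructor <;> · norm_cast; ring

lemma rpos (t : ℝ) :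
    0 < (((1-t)^2 - (t*(1-t))^2 - t^2)^2 + 4*(1-t)^2*(t*(1-t))^2 : ℝ) := by
  rcases eq_or_ne t 0 with rfl | h0
  · norm_num
  rcases eq_or_ne t 1 with rfl | h1
  · norm_num
  have hs : (1 - t) ≠ 0 := sub_ne_zero.mpr (Ne.symm h1)
  have h2 : 0 < 4*(1-t)^2*(t*(1-t))^2 := by positivity
  nlinarith [sq_nonneg ((1-t)^2 - (t*(1-t))^2 - t^2)]

/-- The pairs `(!![1,0;0,-1], 0)` and `(0, 1)` can be joined by a continuous path
`(A_t, B_t)`, `t ∈ [0,1]`, of pairs of 2×2 complex matrices with `B_t` symmetric,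
along which the determinant of `[[A_t, conj B_t],[B_t, conj A_t]]` stays positive. -/
theorem path_in_M_plus_between_models :
    ∃ A B : ℝ → Matrix (Fin 2) (Fin 2) ℂ,
      ContinuousOn A (Set.Icc 0 1) ∧ ContinuousOn B (Set.Icc 0 1) ∧
      A 0 = !![1, 0; 0, -1] ∧ B 0 = 0 ∧ A 1 = 0 ∧ B 1 = 1 ∧
      ∀ t ∈ Set.Icc (0 : ℝ) 1,
        (B t)ᵀ = B t ∧
        0 < (Matrix.fromBlocks (A t) ((B t).map (starRingEnd ℂ)) (B t)
              ((A t).map (starRingEnd ℂ))).det := by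
  refine ⟨Apath, Bpath, ?_, ?_, ?_, ?_, ?_, ?_, ?_⟩
  · refine Continuous.continuousOn (continuous_matrix fun i j => ?_)
    fin_cases i <;> fin_cases j <;> simp [Apath] <;> fun_prop
  · refine Continuous.continuousOn (continuous_matrix fun i j => ?_)
    fin_cases i <;> fin_cases j <;> simp [Bpath] <;> fun_prop
  · norm_num [Apath]
  · ext i j; fin_cases i <;> fin_cases j <;> simp [Bpath]
  · ext i j; fin_cases i <;> fin_cases j <;> norm_num [Apath]
  · ext i j; fin_cases i <;> fin_cases j <;> simp [Bpath, Matrix.one_apply]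
  · intro t _
    constructor
    · ext i j; fin_cases i <;> fin_cases j <;> simp [Bpath]
    · rw [det_path]
      exact_mod_cast Complex.zero_lt_real.mpr (rpos t)
end

section
/- For every t ∈ [0,1] and real x, the determinant of [[A_t, conj(B_t)],[B_t, conj(A_t)]] with A_t = [[t + i·x, 1−t],[0,0]] and B_t = [[0,0],[1−t, t]] equals −((1−2t)² + t²x²); in particular it is negative whenever t ≠ 1/2 or (t = 1/2 and x ≠ 0). -/
open Matrix ComplexOrder

lemma det_block_homotopy_aux1 (t x : ℝ) :
    (Matrix.fromBlocks
        (!![(t : ℂ) + (x : ℂ) * Complex.I, (1 - t : ℂ); 0, 0])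
        ((!![(0 : ℂ), 0; (1 - t : ℂ), (t : ℂ)]).map (starRingEnd ℂ))
        (!![(0 : ℂ), 0; (1 - t : ℂ), (t : ℂ)])
        ((!![(t : ℂ) + (x : ℂ) * Complex.I, (1 - t : ℂ); 0, 0]).map
          (starRingEnd ℂ))).submatrix finSumFinEquiv.symm finSumFinEquiv.symm
    = !![(t : ℂ) + (x : ℂ) * Complex.I, (1 - t : ℂ), 0, 0;
         0, 0, (1 - t : ℂ), (t : ℂ);
         0, 0, (t : ℂ) - (x : ℂ) * Complex.I, (1 - t : ℂ);
         (1 - t : ℂ), (t : ℂ), 0, 0] := by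
  have h0 : (finSumFinEquiv.symm : Fin (2+2) → Fin 2 ⊕ Fin 2) 0 = Sum.inl 0 := by decide
  have h1 : (finSumFinEquiv.symm : Fin (2+2) → Fin 2 ⊕ Fin 2) 1 = Sum.inl 1 := by decide
  have h2 : (finSumFinEquiv.symm : Fin (2+2) → Fin 2 ⊕ Fin 2) 2 = Sum.inr 0 := by decide
  have h3 : (finSumFinEquiv.symm : Fin (2+2) → Fin 2 ⊕ Fin 2) 3 = Sum.inr 1 := by decide
  ext i j
  fin_cases i <;> fin_cases j <;>
    simp [Matrix.submatrix_apply, h0, h1, h2, h3, Matrix.fromBlocks, Matrix.map_apply,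
      Complex.ext_iff]

lemma det_block_homotopy_aux2 (t x : ℝ) :
    (!![(t : ℂ) + (x : ℂ) * Complex.I, (1 - t : ℂ), 0, 0;
         0, 0, (1 - t : ℂ), (t : ℂ);
         0, 0, (t : ℂ) - (x : ℂ) * Complex.I, (1 - t : ℂ);
         (1 - t : ℂ), (t : ℂ), 0, 0]).det
      = ((-((1 - 2 * t) ^ 2 + t ^ 2 * x ^ 2) : ℝ) : ℂ) := by
  simp [Matrix.det_succ_row_zero, Fin.sum_univ_succ, Fin.succAbove, Complex.ext_iff, pow_two]
  constructor <;> ring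

/-- For `A_t = !![t + ix, 1−t; 0, 0]` and `B_t = !![0,0;1−t,t]`, `t ∈ [0,1]`,
`x ∈ ℝ`, the determinant of `[[A_t, conj B_t],[B_t, conj A_t]]` equals
`−((1−2t)² + t²x²)`, hence is negative whenever `t ≠ 1/2`, or `t = 1/2` and `x ≠ 0`. -/
theorem det_block_homotopy_hyperbolic (t x : ℝ) (ht : t ∈ Set.Icc (0 : ℝ) 1) :
    (Matrix.fromBlocks
        (!![(t : ℂ) + (x : ℂ) * Complex.I, (1 - t : ℂ); 0, 0])
        ((!![(0 : ℂ), 0; (1 - t : ℂ), (t : ℂ)]).map (starRingEnd ℂ))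
        (!![(0 : ℂ), 0; (1 - t : ℂ), (t : ℂ)])
        ((!![(t : ℂ) + (x : ℂ) * Complex.I, (1 - t : ℂ); 0, 0]).map
          (starRingEnd ℂ))).det
      = ((-((1 - 2 * t) ^ 2 + t ^ 2 * x ^ 2) : ℝ) : ℂ)
    ∧ ((t ≠ 1 / 2 ∨ (t = 1 / 2 ∧ x ≠ 0)) →
        (Matrix.fromBlocks
          (!![(t : ℂ) + (x : ℂ) * Complex.I, (1 - t : ℂ); 0, 0])
          ((!![(0 : ℂ), 0; (1 - t : ℂ), (t : ℂ)]).map (starRingEnd ℂ))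
          (!![(0 : ℂ), 0; (1 - t : ℂ), (t : ℂ)])
          ((!![(t : ℂ) + (x : ℂ) * Complex.I, (1 - t : ℂ); 0, 0]).map
            (starRingEnd ℂ))).det < 0) := by
  have hdet : (Matrix.fromBlocks
        (!![(t : ℂ) + (x : ℂ) * Complex.I, (1 - t : ℂ); 0, 0])
        ((!![(0 : ℂ), 0; (1 - t : ℂ), (t : ℂ)]).map (starRingEnd ℂ))
        (!![(0 : ℂ), 0; (1 - t : ℂ), (t : ℂ)])
        ((!![(t : ℂ) + (x : ℂ) * Complex.I, (1 - t : ℂ); 0, 0]).map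
          (starRingEnd ℂ))).det
      = ((-((1 - 2 * t) ^ 2 + t ^ 2 * x ^ 2) : ℝ) : ℂ) := by
    rw [← Matrix.det_submatrix_equiv_self finSumFinEquiv.symm, det_block_homotopy_aux1,
      det_block_homotopy_aux2]
  refine ⟨hdet, fun h => ?_⟩
  rw [hdet]
  rw [Complex.ofReal_neg, neg_lt_zero]
  have hpos : (0 : ℝ) < (1 - 2 * t) ^ 2 + t ^ 2 * x ^ 2 := by
    rcases h with h | ⟨h, hx⟩
    · have : (1 - 2 * t) ≠ 0 := by intro h'; apply h; linarith
      positivity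
    · have : t ≠ 0 := by rw [h]; norm_num
      positivity
  exact_mod_cast hpos
end

section
/- The set M⁺ of pairs (A,B) of 2×2 complex matrices with B symmetric and det [[A, conj(B)],[B, conj(A)]] > 0 is path-connected. -/
open Matrix ComplexOrder

noncomputable section

namespace MplusAux

/-- The block determinant `D(A,B)`. -/
def Dc (A B : Matrix (Fin 2) (Fin 2) ℂ) : ℂ :=
  (Matrix.fromBlocks A (B.map (starRingEnd ℂ)) B (A.map (starRingEnd ℂ))).det

/-- The ambient set. -/
def SS : Set (Matrix (Fin 2) (Fin 2) ℂ × Matrix (Fin 2) (Fin 2) ℂ) :=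
  {p | p.2ᵀ = p.2 ∧ 0 < Dc p.1 p.2}

lemma det4 (M : Matrix (Fin 4) (Fin 4) ℂ) : M.det = M 0 0*M 1 1*M 2 2*M 3 3 - M 0 0*M 1 1*M 2 3*M 3 2 - M 0 0*M 1 2*M 2 1*M 3 3 + M 0 0*M 1 2*M 2 3*M 3 1 + M 0 0*M 1 3*M 2 1*M 3 2 - M 0 0*M 1 3*M 2 2*M 3 1 - M 0 1*M 1 0*M 2 2*M 3 3 + M 0 1*M 1 0*M 2 3*M 3 2 + M 0 1*M 1 2*M 2 0*M 3 3 - M 0 1*M 1 2*M 2 3*M 3 0 - M 0 1*M 1 3*M 2 0*M 3 2 + M 0 1*M 1 3*M 2 2*M 3 0 + M 0 2*M 1 0*M 2 1*M 3 3 - M 0 2*M 1 0*M 2 3*M 3 1 - M 0 2*M 1 1*M 2 0*M 3 3 + M 0 2*M 1 1*M 2 3*M 3 0 + M 0 2*M 1 3*M 2 0*M 3 1 - M 0 2*M 1 3*M 2 1*M 3 0 - M 0 3*M 1 0*M 2 1*M 3 2 + M 0 3*M 1 0*M 2 2*M 3 1 + M 0 3*M 1 1*M 2 0*M 3 2 -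 M 0 3*M 1 1*M 2 2*M 3 0 - M 0 3*M 1 2*M 2 0*M 3 1 + M 0 3*M 1 2*M 2 1*M 3 0 := by
  simp [Matrix.det_succ_row_zero, Fin.sum_univ_succ]
  norm_num [Fin.succAbove, Fin.castSucc, Fin.castAdd, Fin.castLE, Fin.succ, Fin.lt_def]
  simp only [show ((⟨3, by norm_num⟩ : Fin 4)) = 3 from rfl,
    show ((⟨2, by norm_num⟩ : Fin 4)) = 2 from rfl]
  ring

lemma detsum (N : Matrix (Fin 2 ⊕ Fin 2) (Fin 2 ⊕ Fin 2) ℂ) : N.det = N (Sum.inl (0 : Fin 2)) (Sum.inl (0 : Fin 2))*N (Sum.inl (1 : Fin 2)) (Sum.inl (1 : Fin 2))*N (Sum.inr (0 : Fin 2)) (Sum.inr (0 : Fin 2))*N (Sum.inr (1 : Fin 2)) (Sum.inr (1 : Fin 2)) - N (Sum.inl (0 : Fin 2)) (Sum.inl (0 : Fin 2))*N (Sum.inl (1 : Fin 2)) (Sum.inl (1 : Fin 2))*N (Sum.inr (0 : Fin 2)) (Sum.inr (1 : Fin 2))*N (Sum.inr (1 : Fin 2)) (Sum.inr (0 : Fin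 2)) - N (Sum.inl (0 : Fin 2)) (Sum.inl (0 : Fin 2))*N (Sum.inl (1 : Fin 2)) (Sum.inr (0 : Fin 2))*N (Sum.inr (0 : Fin 2)) (Sum.inl (1 : Fin 2))*N (Sum.inr (1 : Fin 2)) (Sum.inr (1 : Fin 2)) + N (Sum.inl (0 : Fin 2)) (Sum.inl (0 : Fin 2))*N (Sum.inl (1 : Fin 2)) (Sum.inr (0 : Fin 2))*N (Sum.inr (0 : Fin 2)) (Sum.inr (1 : Fin 2))*N (Sum.inr (1 : Fin 2)) (Sum.inl (1 : Fin 2)) + N (Sum.inl (0 : Fin 2)) (Sum.inl (0 : Fin 2))*N (Sum.inl (1 : Fin 2)) (Sum.inr (1 : Fin 2))*N (Sum.inr (0 : Fin 2)) (Sum.inl (1 : Fin 2))*N (Sum.inr (1 : Fin 2)) (Sum.inr (0 : Fin 2)) - N (Sum.inl (0 : Fin 2)) (Sum.inl (0 : Fin 2))*N (Sum.inl (1 : Fin 2)) (Sum.inr (1 : Fin 2))*N (Sum.inr (0 : Fin 2)) (Sum.inr (0 : Fin 2))*N (Sum.inr (1 : Fin 2)) (Sum.inl (1 : Fin 2)) -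 N (Sum.inl (0 : Fin 2)) (Sum.inl (1 : Fin 2))*N (Sum.inl (1 : Fin 2)) (Sum.inl (0 : Fin 2))*N (Sum.inr (0 : Fin 2)) (Sum.inr (0 : Fin 2))*N (Sum.inr (1 : Fin 2)) (Sum.inr (1 : Fin 2)) + N (Sum.inl (0 : Fin 2)) (Sum.inl (1 : Fin 2))*N (Sum.inl (1 : Fin 2)) (Sum.inl (0 : Fin 2))*N (Sum.inr (0 : Fin 2)) (Sum.inr (1 : Fin 2))*N (Sum.inr (1 : Fin 2)) (Sum.inr (0 : Fin 2)) + N (Sum.inl (0 : Fin 2)) (Sum.inl (1 : Fin 2))*N (Sum.inl (1 : Fin 2)) (Sum.inr (0 : Fin 2))*N (Sum.inr (0 : Fin 2)) (Sum.inl (0 : Fin 2))*N (Sum.inr (1 : Fin 2)) (Sum.inr (1 : Fin 2)) - N (Sum.inl (0 : Fin 2)) (Sum.inl (1 : Fin 2))*N (Sum.inl (1 : Fin 2)) (Sum.inr (0 : Fin 2))*N (Sum.inr (0 : Fin 2)) (Sum.inr (1 : Fin 2))*N (Sum.inr (1 : Fin 2)) (Sum.inl (0 : Fin 2)) - N (Sum.inl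 (0 : Fin 2)) (Sum.inl (1 : Fin 2))*N (Sum.inl (1 : Fin 2)) (Sum.inr (1 : Fin 2))*N (Sum.inr (0 : Fin 2)) (Sum.inl (0 : Fin 2))*N (Sum.inr (1 : Fin 2)) (Sum.inr (0 : Fin 2)) + N (Sum.inl (0 : Fin 2)) (Sum.inl (1 : Fin 2))*N (Sum.inl (1 : Fin 2)) (Sum.inr (1 : Fin 2))*N (Sum.inr (0 : Fin 2)) (Sum.inr (0 : Fin 2))*N (Sum.inr (1 : Fin 2)) (Sum.inl (0 : Fin 2)) + N (Sum.inl (0 : Fin 2)) (Sum.inr (0 : Fin 2))*N (Sum.inl (1 : Fin 2)) (Sum.inl (0 : Fin 2))*N (Sum.inr (0 : Fin 2)) (Sum.inl (1 : Fin 2))*N (Sum.inr (1 : Fin 2)) (Sum.inr (1 : Fin 2)) - N (Sum.inl (0 : Fin 2)) (Sum.inr (0 : Fin 2))*N (Sum.inl (1 : Fin 2)) (Sum.inl (0 : Fin 2))*N (Sum.inr (0 : Fin 2)) (Sum.inr (1 : Fin 2))*N (Sum.inr (1 : Fin 2)) (Sum.inl (1 : Fin 2)) - N (Sum.inl (0 :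 Fin 2)) (Sum.inr (0 : Fin 2))*N (Sum.inl (1 : Fin 2)) (Sum.inl (1 : Fin 2))*N (Sum.inr (0 : Fin 2)) (Sum.inl (0 : Fin 2))*N (Sum.inr (1 : Fin 2)) (Sum.inr (1 : Fin 2)) + N (Sum.inl (0 : Fin 2)) (Sum.inr (0 : Fin 2))*N (Sum.inl (1 : Fin 2)) (Sum.inl (1 : Fin 2))*N (Sum.inr (0 : Fin 2)) (Sum.inr (1 : Fin 2))*N (Sum.inr (1 : Fin 2)) (Sum.inl (0 : Fin 2)) + N (Sum.inl (0 : Fin 2)) (Sum.inr (0 : Fin 2))*N (Sum.inl (1 : Fin 2)) (Sum.inr (1 : Fin 2))*N (Sum.inr (0 : Fin 2)) (Sum.inl (0 : Fin 2))*N (Sum.inr (1 : Fin 2)) (Sum.inl (1 : Fin 2)) - N (Sum.inl (0 : Fin 2)) (Sum.inr (0 : Fin 2))*N (Sum.inl (1 : Fin 2)) (Sum.inr (1 : Fin 2))*N (Sum.inr (0 : Fin 2)) (Sum.inl (1 : Fin 2))*N (Sum.inr (1 : Fin 2)) (Sum.inl (0 : Fin 2)) - N (Sum.inl (0 : Fin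 2)) (Sum.inr (1 : Fin 2))*N (Sum.inl (1 : Fin 2)) (Sum.inl (0 : Fin 2))*N (Sum.inr (0 : Fin 2)) (Sum.inl (1 : Fin 2))*N (Sum.inr (1 : Fin 2)) (Sum.inr (0 : Fin 2)) + N (Sum.inl (0 : Fin 2)) (Sum.inr (1 : Fin 2))*N (Sum.inl (1 : Fin 2)) (Sum.inl (0 : Fin 2))*N (Sum.inr (0 : Fin 2)) (Sum.inr (0 : Fin 2))*N (Sum.inr (1 : Fin 2)) (Sum.inl (1 : Fin 2)) + N (Sum.inl (0 : Fin 2)) (Sum.inr (1 : Fin 2))*N (Sum.inl (1 : Fin 2)) (Sum.inl (1 : Fin 2))*N (Sum.inr (0 : Fin 2)) (Sum.inl (0 : Fin 2))*N (Sum.inr (1 : Fin 2)) (Sum.inr (0 : Fin 2)) - N (Sum.inl (0 : Fin 2)) (Sum.inr (1 : Fin 2))*N (Sum.inl (1 : Fin 2)) (Sum.inl (1 : Fin 2))*N (Sum.inr (0 : Fin 2)) (Sum.inr (0 : Fin 2))*N (Sum.inr (1 : Fin 2)) (Sum.inl (0 : Fin 2)) - N (Sum.inl (0 : Fin 2)) (Sum.inr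 (1 : Fin 2))*N (Sum.inl (1 : Fin 2)) (Sum.inr (0 : Fin 2))*N (Sum.inr (0 : Fin 2)) (Sum.inl (0 : Fin 2))*N (Sum.inr (1 : Fin 2)) (Sum.inl (1 : Fin 2)) + N (Sum.inl (0 : Fin 2)) (Sum.inr (1 : Fin 2))*N (Sum.inl (1 : Fin 2)) (Sum.inr (0 : Fin 2))*N (Sum.inr (0 : Fin 2)) (Sum.inl (1 : Fin 2))*N (Sum.inr (1 : Fin 2)) (Sum.inl (0 : Fin 2)) := by
  rw [← Matrix.det_reindex_self finSumFinEquiv N, det4]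
  simp only [Matrix.reindex_apply, Matrix.submatrix_apply]
  have h0 : (finSumFinEquiv (m := 2) (n := 2)).symm ((0 : Fin 4) : Fin (2+2)) = (Sum.inl (0:Fin 2)) := by decide
  have h1 : (finSumFinEquiv (m := 2) (n := 2)).symm ((1 : Fin 4) : Fin (2+2)) = (Sum.inl (1:Fin 2)) := by decide
  have h2 : (finSumFinEquiv (m := 2) (n := 2)).symm ((2 : Fin 4) : Fin (2+2)) = (Sum.inr (0:Fin 2)) := by decide
  have h3 : (finSumFinEquiv (m := 2) (n := 2)).symm ((3 : Fin 4) : Fin (2+2)) = (Sum.inr (1:Fin 2)) := by decide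
  rw [h0, h1, h2, h3]

lemma Dc_expand (A B : Matrix (Fin 2) (Fin 2) ℂ) : Dc A B = A 0 0*A 1 1*(starRingEnd ℂ) (A 0 0)*(starRingEnd ℂ) (A 1 1) - A 0 0*A 1 1*(starRingEnd ℂ) (A 0 1)*(starRingEnd ℂ) (A 1 0) - A 0 0*(starRingEnd ℂ) (B 1 0)*B 0 1*(starRingEnd ℂ) (A 1 1) + A 0 0*(starRingEnd ℂ) (B 1 0)*(starRingEnd ℂ) (A 0 1)*B 1 1 + A 0 0*(starRingEnd ℂ) (B 1 1)*B 0 1*(starRingEnd ℂ) (A 1 0) - A 0 0*(starRingEnd ℂ) (B 1 1)*(starRingEnd ℂ) (A 0 0)*B 1 1 - A 0 1*A 1 0*(starRingEnd ℂ) (A 0 0)*(starRingEnd ℂ) (A 1 1) + A 0 1*A 1 0*(starRingEnd ℂ) (A 0 1)*(starRingEnd ℂ) (A 1 0) + A 0 1*(starRingEnd ℂ) (B 1 0)*B 0 0*(starRingEnd ℂ) (A 1 1) - A 0 1*(starRingEnd ℂ) (B 1 0)*(starRingEnd ℂ) (A 0 1)*B 1 0 - A 0 1*(starRingEnd ℂ)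 (B 1 1)*B 0 0*(starRingEnd ℂ) (A 1 0) + A 0 1*(starRingEnd ℂ) (B 1 1)*(starRingEnd ℂ) (A 0 0)*B 1 0 + (starRingEnd ℂ) (B 0 0)*A 1 0*B 0 1*(starRingEnd ℂ) (A 1 1) - (starRingEnd ℂ) (B 0 0)*A 1 0*(starRingEnd ℂ) (A 0 1)*B 1 1 - (starRingEnd ℂ) (B 0 0)*A 1 1*B 0 0*(starRingEnd ℂ) (A 1 1) + (starRingEnd ℂ) (B 0 0)*A 1 1*(starRingEnd ℂ) (A 0 1)*B 1 0 + (starRingEnd ℂ) (B 0 0)*(starRingEnd ℂ) (B 1 1)*B 0 0*B 1 1 - (starRingEnd ℂ) (B 0 0)*(starRingEnd ℂ) (B 1 1)*B 0 1*B 1 0 - (starRingEnd ℂ) (B 0 1)*A 1 0*B 0 1*(starRingEnd ℂ) (A 1 0) + (starRingEnd ℂ) (B 0 1)*A 1 0*(starRingEnd ℂ) (A 0 0)*B 1 1 + (starRingEnd ℂ) (B 0 1)*A 1 1*B 0 0*(starRingEnd ℂ) (A 1 0) - (starRingEnd ℂ) (B 0 1)*A 1 1*(starRingEnd ℂ) (A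 0 0)*B 1 0 - (starRingEnd ℂ) (B 0 1)*(starRingEnd ℂ) (B 1 0)*B 0 0*B 1 1 + (starRingEnd ℂ) (B 0 1)*(starRingEnd ℂ) (B 1 0)*B 0 1*B 1 0 := by
  rw [Dc, detsum]
  simp only [Matrix.fromBlocks_apply₁₁, Matrix.fromBlocks_apply₁₂,
    Matrix.fromBlocks_apply₂₁, Matrix.fromBlocks_apply₂₂, Matrix.map_apply]
lemma Dc_conj (A B : Matrix (Fin 2) (Fin 2) ℂ) :
    (starRingEnd ℂ) (Dc A B) = Dc A B := by
  simp only [Dc_expand, map_add, map_sub, _root_.map_mul, map_neg, Complex.conj_conj]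
  ring

lemma Dc_eq_re (A B : Matrix (Fin 2) (Fin 2) ℂ) :
    Dc A B = (((Dc A B).re : ℝ) : ℂ) := by
  have h := Complex.conj_eq_iff_im.mp (Dc_conj A B)
  exact Complex.ext (by simp) (by simp [h])

lemma Dc_A0 (A : Matrix (Fin 2) (Fin 2) ℂ) :
    Dc A 0 = ((Complex.normSq A.det : ℝ) : ℂ) := by
  rw [← Complex.mul_conj, Dc_expand, Matrix.det_fin_two]
  simp only [Matrix.zero_apply, map_zero, map_sub, _root_.map_mul]
  ring

lemma Dc_0B (B : Matrix (Fin 2) (Fin 2) ℂ) :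
    Dc 0 B = ((Complex.normSq B.det : ℝ) : ℂ) := by
  rw [← Complex.mul_conj, Dc_expand, Matrix.det_fin_two]
  simp only [Matrix.zero_apply, map_zero, map_sub, _root_.map_mul]
  ring

/-- real quantities -/
def al (A : Matrix (Fin 2) (Fin 2) ℂ) : ℝ := Complex.normSq A.det

def ga (A B : Matrix (Fin 2) (Fin 2) ℂ) : ℝ := (Dc A B).re - al A - al B

lemma Dc_smul (x y : ℝ) (A B : Matrix (Fin 2) (Fin 2) ℂ) :
    Dc ((x:ℂ) • A) ((y:ℂ) • B) =
      (x:ℂ)^4 * Dc A 0 + (y:ℂ)^4 * Dc 0 B +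
        (x:ℂ)^2 * (y:ℂ)^2 * (Dc A B - Dc A 0 - Dc 0 B) := by
  simp only [Dc_expand, Matrix.smul_apply, Matrix.zero_apply, smul_eq_mul, _root_.map_mul,
    map_zero, Complex.conj_ofReal]
  ring

lemma Dc_re (A B : Matrix (Fin 2) (Fin 2) ℂ) :
    Dc A B = ((al A + al B + ga A B : ℝ) : ℂ) := by
  rw [ga]
  push_cast
  rw [← Dc_eq_re]
  ring

lemma Dc_formula (x y : ℝ) (A B : Matrix (Fin 2) (Fin 2) ℂ) :
    Dc ((x:ℂ) • A) ((y:ℂ) • B) =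
      ((x^4 * al A + y^4 * al B + x^2 * y^2 * ga A B : ℝ) : ℂ) := by
  rw [Dc_smul, Dc_A0, Dc_0B, Dc_re A B]
  push_cast
  simp only [al]
  ring

lemma mem_SS {A B : Matrix (Fin 2) (Fin 2) ℂ} (h1 : Bᵀ = B) (h2 : 0 < Dc A B) :
    (A, B) ∈ SS := ⟨h1, h2⟩

lemma pos_iff {A B : Matrix (Fin 2) (Fin 2) ℂ} :
    0 < Dc A B ↔ 0 < al A + al B + ga A B := by
  rw [Dc_re]; exact Complex.zero_lt_real

/-! ### Trichotomy -/

lemma trichotomy (a b g : ℝ) (ha : 0 ≤ a) (hb : 0 ≤ b) (h : 0 < a + b + g) :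
    (a = 0 ∧ b = 0) ∨
    (0 < a ∧ ∀ s, 0 ≤ s → s ≤ 1 → 0 < a + g * s + b * s^2) ∨
    (0 < b ∧ ∀ x, 0 ≤ x → x ≤ 1 → 0 < a * x^2 + g * x + b) := by
  rcases ha.eq_or_lt with ha0 | hapos
  · rcases hb.eq_or_lt with hb0 | hbpos
    · exact Or.inl ⟨ha0.symm, hb0.symm⟩
    · refine Or.inr (Or.inr ⟨hbpos, fun x hx0 hx1 => ?_⟩)
      rcases le_or_gt 0 g with hg | hg
      · nlinarith [mul_nonneg hg hx0]
      · nlinarith [mul_le_mul_of_nonpos_left hx1 hg.le]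
  · rcases hb.eq_or_lt with hb0 | hbpos
    · refine Or.inr (Or.inl ⟨hapos, fun s hs0 hs1 => ?_⟩)
      rcases le_or_gt 0 g with hg | hg
      · nlinarith [mul_nonneg hg hs0, sq_nonneg s]
      · nlinarith [mul_le_mul_of_nonpos_left hs1 hg.le, sq_nonneg s]
    · by_cases hc : ∀ s, 0 ≤ s → s ≤ 1 → 0 < a + g * s + b * s^2
      · exact Or.inr (Or.inl ⟨hapos, hc⟩)
      · push_neg at hc
        obtain ⟨s₀, hs0, hs1, hP⟩ := hc
        refine Or.inr (Or.inr ⟨hbpos, fun x hx0 hx1 => ?_⟩)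
        by_contra hQ
        push_neg at hQ
        have hx0' : 0 < x := by
          rcases hx0.eq_or_lt with rfl | hx
          · nlinarith
          · exact hx
        have hsx : s₀ * x ≤ 1 := by nlinarith
        rcases hsx.lt_or_eq with hlt | heq
        · nlinarith [mul_pos (mul_pos hx0' (by linarith : (0:ℝ) < 1 - s₀*x)) h,
            mul_nonneg (mul_nonneg hx0 (sub_nonneg.2 hx1)) (neg_nonneg.2 hP),
            mul_nonneg (sub_nonneg.2 hs1) (neg_nonneg.2 hQ),
            mul_nonneg (mul_nonneg (mul_nonneg (sub_nonneg.2 hx1) (sub_nonneg.2 hs1)) hbpos.le)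
              (by linarith : (0:ℝ) ≤ 1 - s₀*x)]
        · have hs₀1 : s₀ = 1 := by nlinarith
          have hx1' : x = 1 := by nlinarith
          rw [hs₀1] at hP
          nlinarith

/-! ### The master scaling path -/

lemma joined_scale (A B : Matrix (Fin 2) (Fin 2) ℂ) (hB : Bᵀ = B) (x₀ x₁ y₀ y₁ : ℝ)
    (h : ∀ t : ℝ, 0 ≤ t → t ≤ 1 →
      0 < (x₀+t*(x₁-x₀))^4 * al A + (y₀+t*(y₁-y₀))^4 * al B +
          (x₀+t*(x₁-x₀))^2 * (y₀+t*(y₁-y₀))^2 * ga A B) :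
    JoinedIn SS (((x₀:ℝ):ℂ) • A, ((y₀:ℝ):ℂ) • B) (((x₁:ℝ):ℂ) • A, ((y₁:ℝ):ℂ) • B) := by
  refine ⟨⟨⟨fun t => ((((x₀+(t:ℝ)*(x₁-x₀) : ℝ) : ℂ)) • A,
      (((y₀+(t:ℝ)*(y₁-y₀) : ℝ) : ℂ)) • B), ?_⟩, ?_, ?_⟩, ?_⟩
  · apply Continuous.prodMk
    · exact (Complex.continuous_ofReal.comp (by continuity)).smul continuous_const
    · exact (Complex.continuous_ofReal.comp (by continuity)).smul continuous_const
  · simp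
  · simp
  · intro t
    refine mem_SS ?_ ?_
    · rw [Matrix.transpose_smul, hB]
    · rw [Dc_formula, Complex.zero_lt_real]
      exact h t t.2.1 t.2.2

lemma joined_down (A B : Matrix (Fin 2) (Fin 2) ℂ) (hB : Bᵀ = B)
    (hd : ∀ s, 0 ≤ s → s ≤ 1 → 0 < al A + ga A B * s + al B * s^2) :
    JoinedIn SS (A, B) (A, 0) := by
  have h := joined_scale A B hB 1 1 1 0 ?_
  · simpa using h
  · intro t ht0 ht1
    have h' := hd ((1-t)^2) (by positivity) (by nlinarith)
    nlinarith [h']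

lemma joined_up (A B : Matrix (Fin 2) (Fin 2) ℂ) (hB : Bᵀ = B)
    (hu : ∀ x, 0 ≤ x → x ≤ 1 → 0 < al A * x^2 + ga A B * x + al B) :
    JoinedIn SS (A, B) (0, B) := by
  have h := joined_scale A B hB 1 0 1 1 ?_
  · simpa using h
  · intro t ht0 ht1
    have h' := hu ((1-t)^2) (by positivity) (by nlinarith)
    nlinarith [h']

/-! ### Paths in the slices via complex lines -/

lemma joined_left (A₀ A₁ : Matrix (Fin 2) (Fin 2) ℂ) (h₀ : A₀.det ≠ 0) (h₁ : A₁.det ≠ 0) :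
    JoinedIn SS (A₀, 0) (A₁, 0) := by
  set U := A₁ - A₀ with hU
  set pol : Polynomial ℂ := Polynomial.C U.det * Polynomial.X^2 +
      Polynomial.C (A₀ 0 0 * U 1 1 + U 0 0 * A₀ 1 1 - A₀ 0 1 * U 1 0 - U 0 1 * A₀ 1 0) *
        Polynomial.X + Polynomial.C A₀.det with hpol
  have key : ∀ z : ℂ, pol.eval z = (A₀ + z • U).det := by
    intro z
    simp [hpol, Matrix.det_fin_two, Matrix.add_apply, Matrix.smul_apply, smul_eq_mul]
    ring
  have hne : pol ≠ 0 := by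
    intro hz
    apply h₀
    have := key 0
    rw [hz] at this
    simpa using this.symm
  have pc : IsPathConnected {z : ℂ | pol.IsRoot z}ᶜ := by
    refine Set.Countable.isPathConnected_compl_of_one_lt_rank ?_
      ((pol.finite_setOf_isRoot hne).countable)
    rw [Complex.rank_real_complex]
    norm_num
  have h0mem : (0:ℂ) ∈ {z : ℂ | pol.IsRoot z}ᶜ := by
    simp only [Set.mem_compl_iff, Set.mem_setOf_eq, Polynomial.IsRoot, key]
    simpa using h₀
  have h1mem : (1:ℂ) ∈ {z : ℂ | pol.IsRoot z}ᶜ := by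
    simp only [Set.mem_compl_iff, Set.mem_setOf_eq, Polynomial.IsRoot, key]
    simpa [hU] using h₁
  obtain ⟨γ, hγ⟩ := pc.joinedIn 0 h0mem 1 h1mem
  refine ⟨⟨⟨fun t => (A₀ + γ t • U, 0), ?_⟩, ?_, ?_⟩, ?_⟩
  · exact (continuous_const.add ((γ.continuous).smul continuous_const)).prodMk
      continuous_const
  · simp
  · simp [hU]
  · intro t
    refine mem_SS (Matrix.transpose_zero) ?_
    rw [Dc_A0, Complex.zero_lt_real]
    refine Complex.normSq_pos.mpr ?_
    rw [← key]
    exact hγ t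

lemma joined_right (B₀ B₁ : Matrix (Fin 2) (Fin 2) ℂ) (hB₀ : B₀ᵀ = B₀) (hB₁ : B₁ᵀ = B₁)
    (h₀ : B₀.det ≠ 0) (h₁ : B₁.det ≠ 0) :
    JoinedIn SS (0, B₀) (0, B₁) := by
  set U := B₁ - B₀ with hU
  set pol : Polynomial ℂ := Polynomial.C U.det * Polynomial.X^2 +
      Polynomial.C (B₀ 0 0 * U 1 1 + U 0 0 * B₀ 1 1 - B₀ 0 1 * U 1 0 - U 0 1 * B₀ 1 0) *
        Polynomial.X + Polynomial.C B₀.det with hpol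
  have key : ∀ z : ℂ, pol.eval z = (B₀ + z • U).det := by
    intro z
    simp [hpol, Matrix.det_fin_two, Matrix.add_apply, Matrix.smul_apply, smul_eq_mul]
    ring
  have hne : pol ≠ 0 := by
    intro hz
    apply h₀
    have := key 0
    rw [hz] at this
    simpa using this.symm
  have pc : IsPathConnected {z : ℂ | pol.IsRoot z}ᶜ := by
    refine Set.Countable.isPathConnected_compl_of_one_lt_rank ?_
      ((pol.finite_setOf_isRoot hne).countable)
    rw [Complex.rank_real_complex]
    norm_num
  have h0mem : (0:ℂ) ∈ {z : ℂ | pol.IsRoot z}ᶜ := by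
    simp only [Set.mem_compl_iff, Set.mem_setOf_eq, Polynomial.IsRoot, key]
    simpa using h₀
  have h1mem : (1:ℂ) ∈ {z : ℂ | pol.IsRoot z}ᶜ := by
    simp only [Set.mem_compl_iff, Set.mem_setOf_eq, Polynomial.IsRoot, key]
    simpa [hU] using h₁
  obtain ⟨γ, hγ⟩ := pc.joinedIn 0 h0mem 1 h1mem
  refine ⟨⟨⟨fun t => (0, B₀ + γ t • U), ?_⟩, ?_, ?_⟩, ?_⟩
  · exact continuous_const.prodMk
      (continuous_const.add ((γ.continuous).smul continuous_const))
  · simp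
  · simp [hU]
  · intro t
    refine mem_SS ?_ ?_
    · rw [Matrix.transpose_add, Matrix.transpose_smul, hU, Matrix.transpose_sub, hB₀, hB₁]
    · rw [Dc_0B, Complex.zero_lt_real]
      refine Complex.normSq_pos.mpr ?_
      rw [← key]
      exact hγ t

/-! ### The bridge -/

def J2 : Matrix (Fin 2) (Fin 2) ℂ := !![0, 1; -1, 0]

lemma detJ2 : J2.det = 1 := by
  rw [J2, Matrix.det_fin_two_of]
  ring

lemma DcJ2 : Dc J2 1 = 4 := by
  rw [Dc_expand]
  norm_num [J2, Matrix.one_apply]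

lemma alJ2 : al J2 = 1 := by rw [al, detJ2, Complex.normSq_one]

lemma al1 : al (1 : Matrix (Fin 2) (Fin 2) ℂ) = 1 := by
  rw [al, Matrix.det_one, Complex.normSq_one]

lemma gaJ2 : ga J2 1 = 2 := by
  rw [ga, DcJ2, alJ2, al1]
  norm_num

lemma bridge : JoinedIn SS (J2, 0) (0, (1 : Matrix (Fin 2) (Fin 2) ℂ)) := by
  have h := joined_scale J2 1 Matrix.transpose_one 1 0 0 1 ?_
  · simpa using h
  · intro t ht0 ht1
    rw [alJ2, al1, gaJ2]
    nlinarith [sq_nonneg (1 - 2*t), sq_nonneg ((1-t)^2 + t^2), sq_nonneg t, sq_nonneg (1-t)]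

/-! ### Perturbation for the degenerate case -/

lemma det_perturb (A : Matrix (Fin 2) (Fin 2) ℂ) (z : ℂ) :
    (A + z • 1).det = z^2 + (A 0 0 + A 1 1) * z + A.det := by
  simp [Matrix.det_fin_two, Matrix.add_apply, Matrix.smul_apply, Matrix.one_apply]
  ring

lemma exists_good (p c : ℂ) {δ : ℝ} (hδ : 0 < δ) :
    ∃ t : ℝ, 0 < t ∧ t ≤ δ ∧ ((t:ℝ):ℂ)^2 + p * ((t:ℝ):ℂ) + c ≠ 0 := by
  have hδc : ((δ:ℝ):ℂ) ≠ 0 := by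
    simpa using hδ.ne'
  by_cases h1 : ((δ:ℝ):ℂ)^2 + p * ((δ:ℝ):ℂ) + c = 0
  · by_cases h2 : (((δ/2:ℝ)):ℂ)^2 + p * (((δ/2:ℝ)):ℂ) + c = 0
    · refine ⟨δ/3, by linarith, by linarith, ?_⟩
      push_cast at h1 h2 ⊢
      have hp : p * δ = -(3/2) * (δ:ℂ)^2 := by linear_combination 2*h1 - 2*h2
      have hc : c = ((δ:ℂ))^2/2 := by linear_combination h1 - hp
      intro hz
      have h9 : ((δ:ℂ))^2/9 = 0 := by linear_combination hz - (1/3)*hp - hc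
      have h0 : ((δ:ℂ))^2 = 0 := by linear_combination 9*h9
      exact hδc (pow_eq_zero_iff (n := 2) (by norm_num) |>.mp h0)
    · exact ⟨δ/2, by linarith, by linarith, h2⟩
  · exact ⟨δ, hδ, le_refl _, h1⟩

lemma cont_f (A B : Matrix (Fin 2) (Fin 2) ℂ) :
    Continuous fun t : ℝ => (Dc (A + ((t:ℝ):ℂ) • 1) B).re := by
  apply Complex.continuous_re.comp
  simp only [Dc]
  apply Continuous.matrix_det
  apply Continuous.matrix_fromBlocks
  · exact continuous_const.add (Complex.continuous_ofReal.smul continuous_const)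
  · exact continuous_const
  · exact continuous_const
  · exact (continuous_const.add (Complex.continuous_ofReal.smul continuous_const)).matrix_map
      Complex.continuous_conj

lemma joined_perturb (A B : Matrix (Fin 2) (Fin 2) ℂ) (hB : Bᵀ = B) (t₀ : ℝ)
    (hpos : ∀ s : ℝ, 0 ≤ s → s ≤ 1 → 0 < (Dc (A + ((s*t₀:ℝ):ℂ) • 1) B).re) :
    JoinedIn SS (A, B) (A + ((t₀:ℝ):ℂ) • 1, B) := by
  refine ⟨⟨⟨fun s => (A + ((((s:ℝ)*t₀ : ℝ)):ℂ) • 1, B), ?_⟩, ?_, ?_⟩, ?_⟩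
  · apply Continuous.prodMk ?_ continuous_const
    exact continuous_const.add ((Complex.continuous_ofReal.comp (by continuity)).smul
      continuous_const)
  · simp
  · simp
  · intro s
    refine mem_SS hB ?_
    rw [Dc_eq_re (A + ((((s:ℝ)*t₀ : ℝ)):ℂ) • 1) B, Complex.zero_lt_real]
    exact hpos s s.2.1 s.2.2

/-! ### Main theorem -/

theorem main : IsPathConnected SS := by
  refine ⟨((1 : Matrix (Fin 2) (Fin 2) ℂ), 0), ⟨Matrix.transpose_zero, ?_⟩, ?_⟩
  · rw [Dc_A0, Complex.zero_lt_real, Matrix.det_one, Complex.normSq_one]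
    norm_num
  · rintro ⟨A, B⟩ ⟨hB, hpos⟩
    have hr : 0 < al A + al B + ga A B := pos_iff.mp hpos
    rcases trichotomy (al A) (al B) (ga A B) (Complex.normSq_nonneg _)
        (Complex.normSq_nonneg _) hr with ⟨hα, hβ⟩ | ⟨hα, hd⟩ | ⟨hβ, hu⟩
    · -- degenerate case : det A = det B = 0, perturb A
      have hdetB : B.det = 0 := Complex.normSq_eq_zero.mp hβ
      have hf := cont_f A B
      have hre : (Dc A B).re = al A + al B + ga A B := by rw [ga]; ring
      have hf0 : 0 < (Dc (A + ((0:ℝ):ℂ) • 1) B).re := by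
        simpa [hre] using hr
      obtain ⟨δ, hδ0, hδ⟩ := Metric.continuousAt_iff.mp (hf.continuousAt (x := (0:ℝ))) _ hf0
      have good : ∀ t : ℝ, 0 ≤ t → t ≤ δ/2 → 0 < (Dc (A + ((t:ℝ):ℂ) • 1) B).re := by
        intro t ht0 ht1
        have hd : dist t (0:ℝ) < δ := by
          rw [Real.dist_eq, sub_zero, abs_of_nonneg ht0]
          linarith
        have := hδ hd
        rw [Real.dist_eq] at this
        have := abs_lt.mp this
        linarith [this.1]
      obtain ⟨t₀, ht₀0, ht₀δ, hq⟩ := exists_good (A 0 0 + A 1 1) A.det (by linarith : 0 < δ/2)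
      have hdet' : (A + ((t₀:ℝ):ℂ) • 1).det ≠ 0 := by
        rw [det_perturb]
        exact hq
      set A' := A + ((t₀:ℝ):ℂ) • 1 with hA'
      have j1 : JoinedIn SS (A, B) (A', B) := by
        refine joined_perturb A B hB t₀ ?_
        intro s hs0 hs1
        exact good (s*t₀) (by positivity) (by nlinarith)
      have hα' : 0 < al A' := Complex.normSq_pos.mpr hdet'
      have hβ' : al B = 0 := hβ
      have hft₀ : 0 < (Dc A' B).re := good t₀ ht₀0.le ht₀δ
      have hsum : al A' + ga A' B = (Dc A' B).re := by
        rw [ga, hβ']; ring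
      have j2 : JoinedIn SS (A', B) (A', 0) := by
        refine joined_down A' B hB ?_
        intro s hs0 hs1
        rw [hβ']
        rcases hs0.eq_or_lt with rfl | hs
        · simpa using hα'
        · nlinarith [mul_pos hs (show 0 < al A' + ga A' B by linarith),
            mul_nonneg (sub_nonneg.2 hs1) hα'.le]
      have j3 : JoinedIn SS (A', 0) (1, 0) :=
        joined_left A' 1 hdet' (by rw [Matrix.det_one]; norm_num)
      exact (j1.trans (j2.trans j3)).symm
    · -- down case
      have j1 : JoinedIn SS (A, B) (A, 0) := joined_down A B hB hd
      have j2 : JoinedIn SS (A, 0) (1, 0) :=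
        joined_left A 1 (Complex.normSq_pos.mp hα) (by rw [Matrix.det_one]; norm_num)
      exact (j1.trans j2).symm
    · -- up case
      have j1 : JoinedIn SS (A, B) (0, B) := joined_up A B hB hu
      have j2 : JoinedIn SS (0, B) (0, 1) :=
        joined_right B 1 hB Matrix.transpose_one (Complex.normSq_pos.mp hβ)
          (by rw [Matrix.det_one]; norm_num)
      have j3 : JoinedIn SS (J2, 0) ((0 : Matrix (Fin 2) (Fin 2) ℂ), 1) := bridge
      have j4 : JoinedIn SS (1, 0) (J2, 0) :=
        joined_left 1 J2 (by rw [Matrix.det_one]; norm_num) (by rw [detJ2]; norm_num)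
      exact j4.trans (j3.trans (j2.symm.trans j1.symm))

end MplusAux

open MplusAux in
/-- The set `M⁺` of pairs `(A,B)` of 2×2 complex matrices with `B` symmetric and
`det [[A, conj B],[B, conj A]] > 0` is path-connected. -/
theorem M_plus_pathConnected :
    IsPathConnected
      {p : Matrix (Fin 2) (Fin 2) ℂ × Matrix (Fin 2) (Fin 2) ℂ |
        p.2ᵀ = p.2 ∧
        0 < (Matrix.fromBlocks p.1 (p.2.map (starRingEnd ℂ)) p.2
              (p.1.map (starRingEnd ℂ))).det} := by
  exact main
end
end

section
/- For the function f(z₁,z₂,w) = (1 + |z₂|²)·|w − |z₁|² − conj(z₂)²|² on ℂ³, the Levi form of f has at least two strictly positive eigenvalues at every point of a sufficiently small punctured neighborhood of the origin; in particular f is strictly 2-convex near the origin away from the origin itself. -/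
open ComplexOrder

/-- The Wirtinger derivative `∂g/∂ζ_j` of `g : ℂ³ → ℂ` (viewed as a real-differentiable
map), at a point `p`. -/
noncomputable def wirtingerDeriv (g : (Fin 3 → ℂ) → ℂ) (j : Fin 3) (p : Fin 3 → ℂ) : ℂ :=
  (1 / 2) * (fderiv ℝ g p (Pi.single j 1) - Complex.I * fderiv ℝ g p (Pi.single j Complex.I))

/-- The conjugate Wirtinger derivative `∂g/∂(conj ζ_k)`. -/
noncomputable def wirtingerDerivBar (g : (Fin 3 → ℂ) → ℂ) (k : Fin 3) (p : Fin 3 → ℂ) : ℂ :=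
  (1 / 2) * (fderiv ℝ g p (Pi.single k 1) + Complex.I * fderiv ℝ g p (Pi.single k Complex.I))

/-- The Levi form (complex Hessian) `∂²f/∂ζ_j ∂(conj ζ_k)` of a real-valued function
`f : ℂ³ → ℝ` at `p`. -/
noncomputable def leviForm (f : (Fin 3 → ℂ) → ℝ) (p : Fin 3 → ℂ) (j k : Fin 3) : ℂ :=
  wirtingerDeriv (fun q => wirtingerDerivBar (fun r => (f r : ℂ)) k q) j p

/-- The Hermitian form `v ↦ ∑_{j,k} L_{jk} v_j conj v_k` associated with the Levi form. -/
noncomputable def leviQuadForm (f : (Fin 3 → ℂ) → ℝ) (p : Fin 3 → ℂ) (v : Fin 3 → ℂ) : ℂ :=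
  ∑ j, ∑ k, leviForm f p j k * v j * starRingEnd ℂ (v k)

open Complex

noncomputable def wD (a b : Fin 3 → ℂ) : (Fin 3 → ℂ) →L[ℝ] ℂ :=
  ∑ j : Fin 3, (a j • ((ContinuousLinearMap.proj j : (Fin 3 → ℂ) →L[ℂ] ℂ).restrictScalars ℝ)
    + b j • ((Complex.conjCLE.toContinuousLinearMap).comp
        ((ContinuousLinearMap.proj j : (Fin 3 → ℂ) →L[ℂ] ℂ).restrictScalars ℝ)))

lemma wD_apply (a b : Fin 3 → ℂ) (v : Fin 3 → ℂ) :
    wD a b v = ∑ j : Fin 3, (a j * v j + b j * starRingEnd ℂ (v j)) := by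
  simp [wD, ContinuousLinearMap.sum_apply, Complex.conjCLE_apply]

lemma wD_single (a b : Fin 3 → ℂ) (k : Fin 3) (c : ℂ) :
    wD a b (Pi.single k c) = a k * c + b k * starRingEnd ℂ c := by
  rw [wD_apply, Fin.sum_univ_three]
  fin_cases k <;> simp

def HasW (g : (Fin 3 → ℂ) → ℂ) (p : Fin 3 → ℂ) (a b : Fin 3 → ℂ) : Prop :=
  HasFDerivAt g (wD a b) p

lemma HasW.fderiv_eq {g p a b} (h : HasW g p a b) : fderiv ℝ g p = wD a b :=
  HasFDerivAt.fderiv h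

lemma HasW.bar {g p a b} (h : HasW g p a b) (k : Fin 3) : wirtingerDerivBar g k p = b k := by
  rw [wirtingerDerivBar, h.fderiv_eq, wD_single, wD_single]
  simp only [map_one, Complex.conj_I, mul_one]
  linear_combination ((a k - b k) / 2) * Complex.I_sq

lemma HasW.der {g p a b} (h : HasW g p a b) (j : Fin 3) : wirtingerDeriv g j p = a j := by
  rw [wirtingerDeriv, h.fderiv_eq, wD_single, wD_single]
  simp only [map_one, Complex.conj_I, mul_one]
  linear_combination (-(a j - b j) / 2) * Complex.I_sq
lemma HasW.of_hasFDerivAt {g p a b} {L : (Fin 3 → ℂ) →L[ℝ] ℂ}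
    (h : HasFDerivAt g L p) (hw : wD a b = L) : HasW g p a b := by
  unfold HasW; rw [hw]; exact h

lemma HasW.congr_vec {g p a b a' b'} (h : HasW g p a b) (ha : a = a') (hb : b = b') :
    HasW g p a' b' := by rwa [← ha, ← hb]

lemma hw_coord (p : Fin 3 → ℂ) (j : Fin 3) : HasW (fun q => q j) p (Pi.single j 1) 0 := by
  refine HasW.of_hasFDerivAt
    (((ContinuousLinearMap.proj j : (Fin 3 → ℂ) →L[ℂ] ℂ).restrictScalars ℝ).hasFDerivAt) ?_
  ext v
  rw [wD_apply, Fin.sum_univ_three]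
  fin_cases j <;> simp

lemma hw_conj (p : Fin 3 → ℂ) (j : Fin 3) :
    HasW (fun q => starRingEnd ℂ (q j)) p 0 (Pi.single j 1) := by
  refine HasW.of_hasFDerivAt (((Complex.conjCLE.toContinuousLinearMap).comp
        ((ContinuousLinearMap.proj j : (Fin 3 → ℂ) →L[ℂ] ℂ).restrictScalars ℝ)).hasFDerivAt) ?_
  ext v
  rw [wD_apply, Fin.sum_univ_three]
  fin_cases j <;> simp [Complex.conjCLE_apply]

lemma hw_const (p : Fin 3 → ℂ) (c : ℂ) : HasW (fun _ => c) p 0 0 := by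
  refine HasW.of_hasFDerivAt (hasFDerivAt_const c p) ?_
  ext v
  rw [wD_apply]
  simp

lemma hw_add {g h : (Fin 3 → ℂ) → ℂ} {p a b a' b'} (hg : HasW g p a b) (hh : HasW h p a' b') :
    HasW (fun q => g q + h q) p (a + a') (b + b') := by
  refine HasW.of_hasFDerivAt (HasFDerivAt.add hg hh) ?_
  ext v
  rw [ContinuousLinearMap.add_apply, wD_apply, wD_apply, wD_apply, ← Finset.sum_add_distrib]
  refine Finset.sum_congr rfl fun j _ => ?_
  simp only [Pi.add_apply]
  ring

lemma hw_mul {g h : (Fin 3 → ℂ) → ℂ} {p a b a' b'} (hg : HasW g p a b) (hh : HasW h p a' b') :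
    HasW (fun q => g q * h q)
      p (fun j => g p * a' j + h p * a j) (fun j => g p * b' j + h p * b j) := by
  refine HasW.of_hasFDerivAt (HasFDerivAt.mul hg hh) ?_
  ext v
  simp only [ContinuousLinearMap.add_apply, ContinuousLinearMap.smul_apply, smul_eq_mul]
  rw [wD_apply, wD_apply, wD_apply, Finset.mul_sum, Finset.mul_sum, ← Finset.sum_add_distrib]
  refine Finset.sum_congr rfl fun j _ => ?_
  ring

lemma hw_neg {g : (Fin 3 → ℂ) → ℂ} {p a b} (hg : HasW g p a b) :
    HasW (fun q => -g q) p (-a) (-b) := by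
  refine HasW.of_hasFDerivAt (HasFDerivAt.neg hg) ?_
  ext v
  rw [ContinuousLinearMap.neg_apply, wD_apply, wD_apply, ← Finset.sum_neg_distrib]
  refine Finset.sum_congr rfl fun j _ => ?_
  simp only [Pi.neg_apply]
  ring

lemma hw_sub {g h : (Fin 3 → ℂ) → ℂ} {p a b a' b'} (hg : HasW g p a b) (hh : HasW h p a' b') :
    HasW (fun q => g q - h q) p (a - a') (b - b') := by
  have := hw_add hg (hw_neg hh)
  simp only [sub_eq_add_neg]
  exact this

noncomputable def Gf (q : Fin 3 → ℂ) : ℂ := 1 + q 1 * starRingEnd ℂ (q 1)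
noncomputable def Hf (q : Fin 3 → ℂ) : ℂ :=
  q 2 - q 0 * starRingEnd ℂ (q 0) - (starRingEnd ℂ (q 1)) ^ 2
noncomputable def Kf (q : Fin 3 → ℂ) : ℂ :=
  starRingEnd ℂ (q 2) - starRingEnd ℂ (q 0) * q 0 - (q 1) ^ 2

lemma F_eq (q : Fin 3 → ℂ) :
    (((1 + ‖q 1‖ ^ 2) *
        ‖q 2 - (‖q 0‖ : ℂ) ^ 2
          - (starRingEnd ℂ (q 1)) ^ 2‖ ^ 2 : ℝ) : ℂ) = Gf q * (Hf q * Kf q) := by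
  have h0 : ((‖q 0‖ : ℂ)) ^ 2 = q 0 * starRingEnd ℂ (q 0) := by
    rw [← Complex.ofReal_pow, Complex.sq_norm, Complex.mul_conj]
  push_cast [Complex.sq_norm]
  rw [h0]
  rw [← Complex.mul_conj, ← Complex.mul_conj]
  simp only [Gf, Hf, Kf, map_add, map_sub, map_mul, map_pow, map_one, Complex.conj_conj]
 

lemma hw_G (p : Fin 3 → ℂ) :
    HasW Gf p ![0, starRingEnd ℂ (p 1), 0] ![0, p 1, 0] := by
  have h := hw_add (hw_const p 1) (hw_mul (hw_coord p 1) (hw_conj p 1))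
  refine (h.congr_vec ?_ ?_) <;> funext j <;> fin_cases j <;> simp

lemma hw_H (p : Fin 3 → ℂ) :
    HasW Hf p ![-(starRingEnd ℂ (p 0)), 0, 1] ![-(p 0), -(2 * starRingEnd ℂ (p 1)), 0] := by
  have hfun : Hf = fun q => (q 2 - q 0 * starRingEnd ℂ (q 0))
      - starRingEnd ℂ (q 1) * starRingEnd ℂ (q 1) := by
    funext q; simp [Hf]; ring
  rw [hfun]
  refine ((hw_sub (hw_sub (hw_coord p 2) (hw_mul (hw_coord p 0) (hw_conj p 0)))
    (hw_mul (hw_conj p 1) (hw_conj p 1))).congr_vec ?_ ?_) <;>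
      funext j <;> fin_cases j <;> simp <;> ring

lemma hw_K (p : Fin 3 → ℂ) :
    HasW Kf p ![-(starRingEnd ℂ (p 0)), -(2 * p 1), 0] ![-(p 0), 0, 1] := by
  have hfun : Kf = fun q => (starRingEnd ℂ (q 2) - starRingEnd ℂ (q 0) * q 0)
      - q 1 * q 1 := by
    funext q; simp [Kf]; ring
  rw [hfun]
  refine ((hw_sub (hw_sub (hw_conj p 2) (hw_mul (hw_conj p 0) (hw_coord p 0)))
    (hw_mul (hw_coord p 1) (hw_coord p 1))).congr_vec ?_ ?_) <;>
      funext j <;> fin_cases j <;> simp <;> ring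

lemma hw_F (p : Fin 3 → ℂ) :
    HasW (fun q => Gf q * (Hf q * Kf q)) p
      ![ -(Gf p * starRingEnd ℂ (p 0) * (Hf p + Kf p)),
         starRingEnd ℂ (p 1) * Hf p * Kf p - 2 * Gf p * p 1 * Hf p,
         Gf p * Kf p ]
      ![ -(Gf p * p 0 * (Hf p + Kf p)),
         p 1 * Hf p * Kf p - 2 * Gf p * starRingEnd ℂ (p 1) * Kf p,
         Gf p * Hf p ] := by
  refine ((hw_mul (hw_G p) (hw_mul (hw_H p) (hw_K p))).congr_vec ?_ ?_) <;>
    funext j <;> fin_cases j <;> simp [Gf, Hf, Kf] <;> ring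

noncomputable def Lm (p : Fin 3 → ℂ) : Fin 3 → Fin 3 → ℂ :=
  ![![2 * Gf p * (p 0 * starRingEnd ℂ (p 0)) - Gf p * (Hf p + Kf p),
     2 * Gf p * (starRingEnd ℂ (p 0) * starRingEnd ℂ (p 1))
       - p 1 * starRingEnd ℂ (p 0) * (Hf p + Kf p),
     -(Gf p * starRingEnd ℂ (p 0))],
    ![2 * Gf p * (p 0 * p 1) - p 0 * starRingEnd ℂ (p 1) * (Hf p + Kf p),
     Hf p * Kf p - 2 * (p 1) ^ 2 * Hf p - 2 * (starRingEnd ℂ (p 1)) ^ 2 * Kf p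
       + 4 * Gf p * (p 1 * starRingEnd ℂ (p 1)),
     starRingEnd ℂ (p 1) * Hf p],
    ![-(Gf p * p 0), p 1 * Kf p, Gf p]]

lemma hw_B0 (p : Fin 3 → ℂ) :
    ∃ b, HasW (fun q => -(Gf q * q 0 * (Hf q + Kf q))) p (fun j => Lm p j 0) b := by
  refine ⟨_, ((hw_neg (hw_mul (hw_mul (hw_G p) (hw_coord p 0))
    (hw_add (hw_H p) (hw_K p)))).congr_vec ?_ rfl)⟩
  funext j; fin_cases j <;> simp [Lm, Gf, Hf, Kf] <;> ring

lemma hw_B1 (p : Fin 3 → ℂ) :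
    ∃ b, HasW (fun q => q 1 * Hf q * Kf q - 2 * Gf q * starRingEnd ℂ (q 1) * Kf q) p
      (fun j => Lm p j 1) b := by
  refine ⟨_, ((hw_sub (hw_mul (hw_mul (hw_coord p 1) (hw_H p)) (hw_K p))
    (hw_mul (hw_mul (hw_mul (hw_const p 2) (hw_G p)) (hw_conj p 1)) (hw_K p))).congr_vec
      ?_ rfl)⟩
  funext j; fin_cases j <;> simp [Lm, Gf, Hf, Kf] <;> ring

lemma hw_B2 (p : Fin 3 → ℂ) :
    ∃ b, HasW (fun q => Gf q * Hf q) p (fun j => Lm p j 2) b := by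
  refine ⟨_, ((hw_mul (hw_G p) (hw_H p)).congr_vec ?_ rfl)⟩
  funext j; fin_cases j <;> simp [Lm, Gf, Hf, Kf] <;> ring

noncomputable def fspec : (Fin 3 → ℂ) → ℝ := fun q =>
  (1 + ‖q 1‖ ^ 2) *
    ‖q 2 - (‖q 0‖ : ℂ) ^ 2 - (starRingEnd ℂ (q 1)) ^ 2‖ ^ 2

lemma levi_eq_aux (p : Fin 3 → ℂ) (j k : Fin 3) (g : (Fin 3 → ℂ) → ℂ)
    (hg : (fun q => wirtingerDerivBar (fun q => Gf q * (Hf q * Kf q)) k q) = g)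
    (b : Fin 3 → ℂ) (hw : HasW g p (fun j => Lm p j k) b) :
    wirtingerDeriv (fun q => wirtingerDerivBar (fun q => Gf q * (Hf q * Kf q)) k q) j p
      = Lm p j k := by
  rw [hg]; exact hw.der j

lemma levi_eq (p : Fin 3 → ℂ) (j k : Fin 3) : leviForm fspec p j k = Lm p j k := by
  unfold leviForm
  have h1 : (fun r => ((fspec r : ℝ) : ℂ)) = fun q => Gf q * (Hf q * Kf q) :=
    funext fun q => F_eq q
  rw [h1]
  fin_cases k
  · obtain ⟨b, hb⟩ := hw_B0 p
    exact levi_eq_aux p j 0 _ (funext fun q => by rw [(hw_F q).bar]; simp) b hb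
  · obtain ⟨b, hb⟩ := hw_B1 p
    exact levi_eq_aux p j 1 _ (funext fun q => by rw [(hw_F q).bar]; simp) b hb
  · obtain ⟨b, hb⟩ := hw_B2 p
    exact levi_eq_aux p j 2 _ (funext fun q => by rw [(hw_F q).bar]; simp) b hb

lemma quad_eq (p v : Fin 3 → ℂ) :
    leviQuadForm fspec p v = ∑ j, ∑ k, Lm p j k * v j * starRingEnd ℂ (v k) := by
  unfold leviQuadForm
  refine Finset.sum_congr rfl fun j _ => Finset.sum_congr rfl fun k _ => ?_
  rw [levi_eq]

lemma hKH (p : Fin 3 → ℂ) : Kf p = starRingEnd ℂ (Hf p) := by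
  simp only [Hf, Kf, map_sub, map_mul, map_pow, Complex.conj_conj]

lemma ofReal_re_eq (z : ℂ) : ((z.re : ℝ) : ℂ) = (z + starRingEnd ℂ z) / 2 := by
  rw [Complex.add_conj]
  push_cast
  ring

lemma pos2 (p : Fin 3 → ℂ) (h1 : p 1 = 0) (hH : Hf p = 0) (h0 : p 0 ≠ 0)
    (v : Fin 3 → ℂ) (hv1 : v 1 = 0) (hv : v 0 ≠ 0 ∨ v 2 ≠ 0) :
    (0:ℂ) < ∑ j, ∑ k, Lm p j k * v j * starRingEnd ℂ (v k) := by
  have hK : Kf p = 0 := by rw [hKH, hH, map_zero]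
  have heq : (∑ j, ∑ k, Lm p j k * v j * starRingEnd ℂ (v k))
      = ((Complex.normSq (starRingEnd ℂ (p 0) * v 0)
          + Complex.normSq (starRingEnd ℂ (p 0) * v 0 - v 2) : ℝ) : ℂ) := by
    simp only [Fin.sum_univ_three]
    simp only [Lm, Matrix.cons_val_zero, Matrix.cons_val_one, Matrix.head_cons,
      Matrix.cons_val_two, Matrix.tail_cons, Gf]
    rw [hH, hK, h1, hv1]
    push_cast
    simp only [← Complex.mul_conj]
    simp only [map_sub, map_mul, map_zero, Complex.conj_conj]
    ring
  rw [heq, Complex.zero_lt_real]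
  by_cases hv0 : v 0 = 0
  · rw [hv0]
    have hv2 : v 2 ≠ 0 := hv.resolve_left (by simp [hv0])
    simp only [mul_zero, Complex.normSq_zero, zero_sub, Complex.normSq_neg, zero_add]
    exact Complex.normSq_pos.mpr hv2
  · have : starRingEnd ℂ (p 0) * v 0 ≠ 0 :=
      mul_ne_zero (by simpa using h0) hv0
    exact add_pos_of_pos_of_nonneg (Complex.normSq_pos.mpr this) (Complex.normSq_nonneg _)

lemma key_ineq (a b cc dd : ℝ) (ha0 : 0 ≤ a) (hb0 : 0 ≤ b) (hcc : 0 < cc)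
    (hdd0 : 0 ≤ dd) (haup : a ≤ 3/8) (hab : 0 < a ∨ 0 < b) :
    0 < a^2*cc^2 - 4*(a*b^2)*cc^2 + 4*(1+b^2)*(b^2*cc^2) - 2*(b*a*cc*dd) + (1+b^2)*dd^2 := by
  have hsq : 2*(b*a*cc*dd) ≤ b^2*cc^2 + a^2*dd^2 := by nlinarith [sq_nonneg (b*cc - a*dd)]
  have h1 : 0 ≤ (b^2*cc^2) * (3 + 4*b^2 - 4*a - 3/2) := by
    apply mul_nonneg (by positivity); nlinarith [sq_nonneg b]
  have h2 : 0 ≤ dd^2 * (1 + b^2 - a^2) := by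
    apply mul_nonneg (by positivity); nlinarith
  rcases hab with ha | hb
  · nlinarith [mul_pos (mul_pos ha ha) (mul_pos hcc hcc), mul_nonneg (mul_nonneg hb0 hb0) (mul_nonneg hcc.le hcc.le)]
  · nlinarith [mul_pos (mul_pos hb hb) (mul_pos hcc hcc), sq_nonneg (a*cc)]

lemma pos1 (p : Fin 3 → ℂ) (h0 : ‖p 0‖ < 1/4) (h1 : ‖p 1‖ < 1/4)
    (h2 : ‖p 2‖ < 1/4) (hcase : Hf p ≠ 0 ∨ p 1 ≠ 0)
    (v : Fin 3 → ℂ) (hv0 : v 0 = 0) (hv : v 1 ≠ 0 ∨ v 2 ≠ 0) :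
    (0:ℂ) < ∑ j, ∑ k, Lm p j k * v j * starRingEnd ℂ (v k) := by
  have heq : (∑ j, ∑ k, Lm p j k * v j * starRingEnd ℂ (v k))
      = ((Complex.normSq (Hf p) * Complex.normSq (v 1)
          - 4 * (Hf p * (p 1)^2).re * Complex.normSq (v 1)
          + 4 * (1 + Complex.normSq (p 1)) * (Complex.normSq (p 1) * Complex.normSq (v 1))
          + 2 * (starRingEnd ℂ (p 1) * Hf p * v 1 * starRingEnd ℂ (v 2)).re
          + (1 + Complex.normSq (p 1)) * Complex.normSq (v 2) : ℝ) : ℂ) := by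
    simp only [Fin.sum_univ_three]
    simp only [Lm, Matrix.cons_val_zero, Matrix.cons_val_one, Matrix.head_cons,
      Matrix.cons_val_two, Matrix.tail_cons, Gf]
    rw [hKH p, hv0]
    push_cast
    simp only [ofReal_re_eq]
    simp only [← Complex.mul_conj]
    simp only [map_sub, map_mul, map_add, map_pow, map_zero, map_one, Complex.conj_conj]
    ring
  rw [heq, Complex.zero_lt_real]
  by_cases hv1 : v 1 = 0
  · have hv2 : v 2 ≠ 0 := hv.resolve_left (by simp [hv1])
    rw [hv1]
    simp only [Complex.normSq_zero, mul_zero, zero_mul, map_zero, Complex.zero_re,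
      sub_zero, add_zero, zero_add, mul_zero]
    have : 0 < Complex.normSq (v 2) := Complex.normSq_pos.mpr hv2
    nlinarith [Complex.normSq_nonneg (p 1)]
  · -- main case
    set a := ‖Hf p‖ with ha_def
    set b := ‖p 1‖ with hb_def
    set cc := ‖v 1‖ with hcc_def
    set dd := ‖v 2‖ with hdd_def
    have ha0 : 0 ≤ a := norm_nonneg _
    have hb0 : 0 ≤ b := norm_nonneg _
    have hcc : 0 < cc := norm_pos_iff.mpr hv1
    have hdd0 : 0 ≤ dd := norm_nonneg _
    have haup : a ≤ 3/8 := by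
      have step1 : a ≤ ‖p 2 - p 0 * starRingEnd ℂ (p 0)‖
          + ‖(starRingEnd ℂ (p 1))^2‖ := by
        rw [ha_def]
        simp only [Hf]
        exact norm_sub_le _ _
      have step2 : ‖p 2 - p 0 * starRingEnd ℂ (p 0)‖
          ≤ ‖p 2‖ + ‖p 0 * starRingEnd ℂ (p 0)‖ :=
        norm_sub_le _ _
      have e1 : ‖p 0 * starRingEnd ℂ (p 0)‖ = ‖p 0‖ ^ 2 := by
        rw [norm_mul, Complex.norm_conj]; ring
      have e2 : ‖(starRingEnd ℂ (p 1))^2‖ = b ^ 2 := by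
        rw [norm_pow, Complex.norm_conj]
      have hb4 : b < 1/4 := h1
      nlinarith [norm_nonneg (p 0), norm_nonneg (p 2)]
    have hbup : b < 1/4 := h1
    have hY : (Hf p * (p 1)^2).re ≤ a * b^2 := by
      refine le_trans (Complex.re_le_norm _) (le_of_eq ?_)
      rw [norm_mul, norm_pow]
    have hX : -(b * a * cc * dd) ≤ (starRingEnd ℂ (p 1) * Hf p * v 1 * starRingEnd ℂ (v 2)).re := by
      have h := (abs_le.mp (Complex.abs_re_le_norm
        (starRingEnd ℂ (p 1) * Hf p * v 1 * starRingEnd ℂ (v 2)))).1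
      have e : ‖starRingEnd ℂ (p 1) * Hf p * v 1 * starRingEnd ℂ (v 2)‖
          = b * a * cc * dd := by
        simp only [norm_mul, Complex.norm_conj]; rfl
      rw [e] at h
      exact h
    have hn1 : Complex.normSq (Hf p) = a^2 := (Complex.sq_norm _).symm
    have hn2 : Complex.normSq (p 1) = b^2 := (Complex.sq_norm _).symm
    have hn3 : Complex.normSq (v 1) = cc^2 := (Complex.sq_norm _).symm
    have hn4 : Complex.normSq (v 2) = dd^2 := (Complex.sq_norm _).symm
    have hab : 0 < a ∨ 0 < b := by
      rcases hcase with hc | hc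
      · exact Or.inl (norm_pos_iff.mpr hc)
      · exact Or.inr (norm_pos_iff.mpr hc)
    have hY2 : 4 * (Hf p * (p 1)^2).re * cc^2 ≤ 4*(a*b^2)*cc^2 := by
      nlinarith [mul_le_mul_of_nonneg_right hY (sq_nonneg cc)]
    rw [hn1, hn2, hn4, hn3]
    linarith [key_ineq a b cc dd ha0 hb0 hcc hdd0 haup hab, hY2, hX]

lemma rank_two (i j : Fin 3) (hij : i ≠ j) :
    Module.finrank ℂ
      (Submodule.span ℂ {Pi.single i (1:ℂ), Pi.single j 1} : Submodule ℂ (Fin 3 → ℂ)) = 2 := by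
  have hli : LinearIndependent ℂ ![(Pi.single i (1:ℂ) : Fin 3 → ℂ), Pi.single j 1] := by
    rw [LinearIndependent.pair_iff]
    intro s t hst
    constructor
    · have h := congrFun hst i
      simpa [Pi.single_apply, hij.symm] using h
    · have h := congrFun hst j
      simpa [Pi.single_apply, hij] using h
  have h := finrank_span_eq_card hli
  rw [Matrix.range_cons_cons_empty] at h
  simpa using h


/-- For `f(z₁,z₂,w) = (1 + |z₂|²)|w − |z₁|² − conj z₂²|²`, the Levi form has at least
two strictly positive eigenvalues at every point of a sufficiently small punctured
neighborhood of the origin: there is a 2-dimensional complex subspace on which the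
associated Hermitian form is positive definite. In particular `f` is strictly
2-convex near the origin away from the origin. -/
theorem two_convex_model_hyperbolic :
    ∃ ε > 0, ∀ p : Fin 3 → ℂ, ‖p‖ < ε → p ≠ 0 →
      ∃ V : Submodule ℂ (Fin 3 → ℂ), Module.finrank ℂ V = 2 ∧
        ∀ v ∈ V, v ≠ 0 →
          0 < leviQuadForm (fun q => (1 + ‖q 1‖ ^ 2) *
                ‖q 2 - (‖q 0‖ : ℂ) ^ 2
                  - (starRingEnd ℂ (q 1)) ^ 2‖ ^ 2) p v := by
  refine ⟨1/4, by norm_num, fun p hp hp0 => ?_⟩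
  have hpb : ∀ i, ‖p i‖ < 1/4 := fun i => by
    exact lt_of_le_of_lt (norm_le_pi_norm p i) hp
  by_cases hc : Hf p = 0 ∧ p 1 = 0
  · obtain ⟨hH, h1⟩ := hc
    have h2 : p 2 = 0 ∨ p 0 ≠ 0 := by
      by_cases h00 : p 0 = 0
      · left
        have := hH
        simp only [Hf, h00, h1, map_zero, zero_mul, mul_zero] at this
        simpa using this
      · right; exact h00
    have h0 : p 0 ≠ 0 := by
      rcases h2 with h2 | h2
      · intro h00
        apply hp0
        have hp2 : p 2 = 0 := h2
        funext i
        fin_cases i <;> simp [h00, h1, hp2]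
      · exact h2
    refine ⟨Submodule.span ℂ {Pi.single 0 1, Pi.single 2 1}, rank_two 0 2 (by decide), ?_⟩
    intro v hv hvne
    obtain ⟨s, t, hst⟩ := Submodule.mem_span_pair.mp hv
    have hv1 : v 1 = 0 := by
      rw [← hst]; simp [Pi.single_apply]
    have hv0or : v 0 ≠ 0 ∨ v 2 ≠ 0 := by
      by_contra hcon
      push_neg at hcon
      apply hvne
      funext i
      fin_cases i <;> simp [hcon.1, hv1, hcon.2]
    have hpos := pos2 p h1 hH h0 v hv1 hv0or
    show (0:ℂ) < leviQuadForm fspec p v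
    rw [quad_eq]
    exact hpos
  · rw [not_and_or] at hc
    refine ⟨Submodule.span ℂ {Pi.single 1 1, Pi.single 2 1}, rank_two 1 2 (by decide), ?_⟩
    intro v hv hvne
    obtain ⟨s, t, hst⟩ := Submodule.mem_span_pair.mp hv
    have hv0 : v 0 = 0 := by
      rw [← hst]; simp [Pi.single_apply]
    have hvor : v 1 ≠ 0 ∨ v 2 ≠ 0 := by
      by_contra hcon
      push_neg at hcon
      apply hvne
      funext i
      fin_cases i <;> simp [hcon.1, hv0, hcon.2]
    have hcase : Hf p ≠ 0 ∨ p 1 ≠ 0 := hc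
    have hpos := pos1 p (hpb 0) (hpb 1) (hpb 2) hcase v hv0 hvor
    show (0:ℂ) < leviQuadForm fspec p v
    rw [quad_eq]
    exact hpos
end

section
/- For a 2×2 Hermitian-quadratic model: if u = w − |z₁|² − conj(z₂)², the 2×2 minor [[|u|² − 2(z₂²u + conj(z₂)² conj(u)) + 4|z₂|²(1+|z₂|²), conj(z₂)u],[z₂ conj(u), 1 + |z₂|²]] of the Levi form of (1+|z₂|²)|u|² has determinant (|u| − 2|z₂|²(1+|z₂|²))² + 2(1+|z₂|²)(2|u||z₂|² − z₂²u − conj(z₂)²conj(u)) + 4|z₂|²(1+|z₂|²)²(1 − |z₂|²), which is strictly positive for |z₂| < 1 unless z₂ = 0 and u = 0. -/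
open Matrix ComplexOrder

/-- The 2×2 minor of the Levi form of `(1+|z₂|²)|u|²` (with `u = w − |z₁|² − conj z₂²`)
given by
`[[|u|² − 2(z₂²u + conj z₂² conj u) + 4|z₂|²(1+|z₂|²), conj z₂ · u],[z₂ · conj u, 1+|z₂|²]]`
has determinant
`(|u| − 2|z₂|²(1+|z₂|²))² + 2(1+|z₂|²)(2|u||z₂|² − z₂²u − conj z₂² conj u)
  + 4|z₂|²(1+|z₂|²)²(1−|z₂|²)`,
which is strictly positive for `|z₂| < 1` unless `z₂ = 0` and `u = 0`. -/
theorem levi_minor_det (z₂ u : ℂ) :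
    (!![ (‖u‖ : ℂ) ^ 2
          - 2 * (z₂ ^ 2 * u + (starRingEnd ℂ z₂) ^ 2 * starRingEnd ℂ u)
          + 4 * (‖z₂‖ : ℂ) ^ 2 * (1 + (‖z₂‖ : ℂ) ^ 2),
        starRingEnd ℂ z₂ * u;
        z₂ * starRingEnd ℂ u, 1 + (‖z₂‖ : ℂ) ^ 2] :
      Matrix (Fin 2) (Fin 2) ℂ).det
      = ((‖u‖ : ℂ) - 2 * (‖z₂‖ : ℂ) ^ 2
            * (1 + (‖z₂‖ : ℂ) ^ 2)) ^ 2
        + 2 * (1 + (‖z₂‖ : ℂ) ^ 2)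
            * (2 * (‖u‖ : ℂ) * (‖z₂‖ : ℂ) ^ 2
              - z₂ ^ 2 * u - (starRingEnd ℂ z₂) ^ 2 * starRingEnd ℂ u)
        + 4 * (‖z₂‖ : ℂ) ^ 2 * (1 + (‖z₂‖ : ℂ) ^ 2) ^ 2
            * (1 - (‖z₂‖ : ℂ) ^ 2)
    ∧ (‖z₂‖ < 1 → ¬(z₂ = 0 ∧ u = 0) →
        0 < (!![ (‖u‖ : ℂ) ^ 2
          - 2 * (z₂ ^ 2 * u + (starRingEnd ℂ z₂) ^ 2 * starRingEnd ℂ u)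
          + 4 * (‖z₂‖ : ℂ) ^ 2 * (1 + (‖z₂‖ : ℂ) ^ 2),
        starRingEnd ℂ z₂ * u;
        z₂ * starRingEnd ℂ u, 1 + (‖z₂‖ : ℂ) ^ 2] :
      Matrix (Fin 2) (Fin 2) ℂ).det) := by
  have hu : ((‖u‖ : ℂ)) ^ 2 = u * starRingEnd ℂ u := by
    rw [Complex.mul_conj]; norm_cast; exact Complex.sq_norm u
  have hz : ((‖z₂‖ : ℂ)) ^ 2 = z₂ * starRingEnd ℂ z₂ := by
    rw [Complex.mul_conj]; norm_cast; exact Complex.sq_norm z₂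
  have hdet : (!![ (‖u‖ : ℂ) ^ 2
          - 2 * (z₂ ^ 2 * u + (starRingEnd ℂ z₂) ^ 2 * starRingEnd ℂ u)
          + 4 * (‖z₂‖ : ℂ) ^ 2 * (1 + (‖z₂‖ : ℂ) ^ 2),
        starRingEnd ℂ z₂ * u;
        z₂ * starRingEnd ℂ u, 1 + (‖z₂‖ : ℂ) ^ 2] :
      Matrix (Fin 2) (Fin 2) ℂ).det
      = ((‖u‖ : ℂ) - 2 * (‖z₂‖ : ℂ) ^ 2
            * (1 + (‖z₂‖ : ℂ) ^ 2)) ^ 2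
        + 2 * (1 + (‖z₂‖ : ℂ) ^ 2)
            * (2 * (‖u‖ : ℂ) * (‖z₂‖ : ℂ) ^ 2
              - z₂ ^ 2 * u - (starRingEnd ℂ z₂) ^ 2 * starRingEnd ℂ u)
        + 4 * (‖z₂‖ : ℂ) ^ 2 * (1 + (‖z₂‖ : ℂ) ^ 2) ^ 2
            * (1 - (‖z₂‖ : ℂ) ^ 2) := by
    rw [Matrix.det_fin_two_of]
    linear_combination ((‖z₂‖ : ℂ)) ^ 2 * hu + (u * starRingEnd ℂ u) * hz
  refine ⟨hdet, fun hlt hne => ?_⟩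
  rw [hdet]
  set r : ℝ := ‖u‖ with hr
  set s : ℝ := ‖z₂‖ with hs
  set t : ℝ := (z₂ ^ 2 * u).re with htdef
  have hconj : z₂ ^ 2 * u + (starRingEnd ℂ z₂) ^ 2 * starRingEnd ℂ u
      = 2 * ((t : ℝ) : ℂ) := by
    have := Complex.add_conj (z₂ ^ 2 * u)
    rw [_root_.map_mul, map_pow] at this
    rw [htdef, this]; push_cast; ring
  have hE : ((r : ℂ) - 2 * (s : ℂ) ^ 2 * (1 + (s : ℂ) ^ 2)) ^ 2
        + 2 * (1 + (s : ℂ) ^ 2) * (2 * (r : ℂ) * (s : ℂ) ^ 2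
            - z₂ ^ 2 * u - (starRingEnd ℂ z₂) ^ 2 * starRingEnd ℂ u)
        + 4 * (s : ℂ) ^ 2 * (1 + (s : ℂ) ^ 2) ^ 2 * (1 - (s : ℂ) ^ 2)
      = (((r - 2 * s ^ 2 * (1 + s ^ 2)) ^ 2
          + 2 * (1 + s ^ 2) * (2 * r * s ^ 2 - 2 * t)
          + 4 * s ^ 2 * (1 + s ^ 2) ^ 2 * (1 - s ^ 2) : ℝ) : ℂ) := by
    push_cast
    linear_combination (-(2 * (1 + (s : ℂ) ^ 2))) * hconj
  rw [hE, Complex.zero_lt_real]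
  have ht : t ≤ s ^ 2 * r := by
    calc t ≤ ‖z₂ ^ 2 * u‖ := Complex.re_le_norm _
    _ = s ^ 2 * r := by rw [norm_mul, norm_pow]
  have hr0 : 0 ≤ r := norm_nonneg u
  have hs0 : 0 ≤ s := norm_nonneg z₂
  have hmid : 0 ≤ 2 * r * s ^ 2 - 2 * t := by nlinarith
  by_cases hz0 : z₂ = 0
  · have hszero : s = 0 := by simp [hs, hz0]
    have hu0 : u ≠ 0 := fun h => hne ⟨hz0, h⟩
    have hrpos : 0 < r := by
      rw [hr]; exact norm_pos_iff.mpr hu0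
    rw [hszero]
    have ht0 : t = 0 := by simp [htdef, hz0]
    rw [ht0]
    nlinarith
  · have hspos : 0 < s := by rw [hs]; exact norm_pos_iff.mpr hz0
    have h1s : 0 < 1 - s ^ 2 := by nlinarith
    have hlast : 0 < 4 * s ^ 2 * (1 + s ^ 2) ^ 2 * (1 - s ^ 2) := by positivity
    nlinarith [sq_nonneg (r - 2 * s ^ 2 * (1 + s ^ 2)), hlast,
      mul_nonneg (by positivity : (0:ℝ) ≤ 2 * (1 + s ^ 2)) hmid]
end
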